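/- arXiv:0706.0921 — 2 statements merged into one kernel-verified Lean document; each statement's English description precedes it below -/
import Mathlib

section
/- Lemma (orthogonality of upper and lower boundary values). Let Z be a 2×2 matrix-valued function, analytic on ℂ∖ℝ, such that for every x ∈ ℝ the limits Z₊(x) = lim_{δ→0⁺} Z(x+iδ) and Z₋(x) = lim_{δ→0⁺} Z(x−iδ) exist and define continuous functions on ℝ, and such that there is a constant c with ‖Z(ζ)‖ ≤ c(1+|ζ|)^{−3/4} for all ζ ∉ ℝ. Then ∫_ℝ Z₊(s) Z₋(s)* ds = 0 (the 2×2 zero matrix), where Z₋(s)* denotes the conjugate transpose of Z₋(s). -/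
noncomputable section

open Complex MeasureTheory Filter Topology Set

/-- 2×2 complex matrices. -/
abbrev Mat2 := Matrix (Fin 2) (Fin 2) ℂ

/-- The "twist" matrix 𝔪(z) = diag(z^{-1/4}, z^{1/4}) · (1/√2)[[1,1],[-1,1]] · diag(e^{-iπ/4}, e^{iπ/4}),
with principal branches of the quarter powers (cut along (-∞,0]). -/
def twistMat (z : ℂ) : Mat2 :=
  !![z ^ (-(1:ℂ)/4), 0; 0, z ^ ((1:ℂ)/4)] *
    ((Real.sqrt 2 : ℂ)⁻¹ • !![(1:ℂ), 1; -1, 1]) *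
    !![Complex.exp (-((Real.pi : ℂ) * Complex.I) / 4), 0; 0, Complex.exp ((Real.pi : ℂ) * Complex.I / 4)]

/-- The open ray arg z = 2π/3. -/
def rayPlus : Set ℂ := {z : ℂ | z ≠ 0 ∧ z.arg = 2 * Real.pi / 3}

/-- The open ray arg z = -2π/3. -/
def rayMinus : Set ℂ := {z : ℂ | z ≠ 0 ∧ z.arg = -(2 * Real.pi / 3)}

/-- The open negative real axis (-∞, 0). -/
def negAxis : Set ℂ := {z : ℂ | z.im = 0 ∧ z.re < 0}

/-- Open sector lo < arg z < hi. -/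
def sector (lo hi : ℝ) : Set ℂ := {z : ℂ | lo < z.arg ∧ z.arg < hi}

/-- Lower-triangular jump matrix [[1, 0], [exp((4/3)z^{3/2} + 2 a z^{1/2}), 1]] (principal branches). -/
def Jlow (a : ℝ) (z : ℂ) : Mat2 :=
  !![1, 0; Complex.exp ((4/3) * z ^ ((3:ℂ)/2) + 2 * (a:ℂ) * z ^ ((1:ℂ)/2)), 1]

/-- Upper-triangular jump matrix [[1, exp(-(4/3)z^{3/2})], [0, 1]]. -/
def Jup (z : ℂ) : Mat2 := !![1, Complex.exp (-(4/3) * z ^ ((3:ℂ)/2)); 0, 1]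

/-- The twist jump matrix [[0, 1], [-1, 0]]. -/
def Jtwist : Mat2 := !![0, 1; -1, 0]

/-- `L` is the boundary value of `M` at `x` taken from within the set `S` (entrywise limit). -/
def BV (M : ℂ → Mat2) (S : Set ℂ) (x : ℂ) (L : Mat2) : Prop :=
  ∀ i j, Filter.Tendsto (fun w => M w i j) (nhdsWithin x S) (nhds (L i j))

/-- `M` stays bounded near the point `p` (off the contour `Sg`). -/
def BoundedNear (Sg : Set ℂ) (M : ℂ → Mat2) (p : ℂ) : Prop :=
  ∃ C ε : ℝ, 0 < ε ∧ ∀ z ∉ Sg, ‖z - p‖ < ε → ∀ i j, ‖M z i j‖ ≤ C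

/-- Near `p` (off the contour `Sg`): the first column of `M` stays bounded while the second
column is O(log|z - p|). -/
def LogColNear (Sg : Set ℂ) (M : ℂ → Mat2) (p : ℂ) : Prop :=
  ∃ C ε : ℝ, 0 < ε ∧ ∀ z ∉ Sg, ‖z - p‖ < ε →
    (∀ i, ‖M z i 0‖ ≤ C) ∧
    (∀ i, ‖M z i 1‖ ≤ C * (1 + |Real.log (‖z - p‖)|))

/-- M(z) = 𝔪(z) · (I + O(1/z)) as z → ∞ off the contour `Sg`. -/
def AsympTwist (Sg : Set ℂ) (M : ℂ → Mat2) : Prop :=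
  ∃ C R : ℝ, ∀ z ∉ Sg, R < ‖z‖ →
    ∀ i j, ‖((twistMat z)⁻¹ * M z - 1) i j‖ ≤ C / ‖z‖

/-- The constant (2π)^{-1/2} e^{iπ/4}. -/
def cJan : ℂ := (Real.sqrt (2 * Real.pi) : ℂ)⁻¹ * Complex.exp ((Real.pi : ℂ) * Complex.I / 4)

lemma myIntegrable_one_add_abs_rpow {p : ℝ} (hp : 1 < p) :
    Integrable (fun x : ℝ => (1 + |x|) ^ (-p)) := by
  have hcont : Continuous (fun x : ℝ => (1 + |x|) ^ (-p)) := by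
    apply Continuous.rpow_const (continuous_const.add _root_.continuous_abs)
    intro x; left; exact (by positivity : (0:ℝ) < 1 + |x|).ne'
  have h1 : IntegrableOn (fun x : ℝ => x ^ (-p)) (Ioi 1) :=
    integrableOn_Ioi_rpow_of_lt (by linarith) one_pos
  have h2 : IntegrableOn (fun x : ℝ => (1 + |x|) ^ (-p)) (Ioi 1) := by
    refine h1.mono' hcont.aestronglyMeasurable.restrict ?_
    filter_upwards [ae_restrict_mem measurableSet_Ioi] with x hx
    rw [Real.norm_eq_abs, _root_.abs_of_nonneg (Real.rpow_nonneg (by positivity) _)]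
    exact Real.rpow_le_rpow_of_nonpos (by linarith [mem_Ioi.mp hx])
      (by rw [_root_.abs_of_nonneg (by linarith [mem_Ioi.mp hx] : (0:ℝ) ≤ x)]; linarith) (by linarith)
  have h2' : Integrable ((Ioi (1:ℝ)).indicator (fun x : ℝ => (1 + |x|) ^ (-p))) :=
    h2.integrable_indicator measurableSet_Ioi
  have h3 : IntegrableOn (fun x : ℝ => (1 + |x|) ^ (-p)) (Iio (-1)) := by
    have := h2'.comp_neg
    have heq : (fun x : ℝ => (Ioi (1:ℝ)).indicator (fun x : ℝ => (1 + |x|) ^ (-p)) (-x))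
        = (Iio (-1:ℝ)).indicator (fun x : ℝ => (1 + |x|) ^ (-p)) := by
      funext x
      by_cases hx : x < -1
      · rw [indicator_of_mem (show -x ∈ Ioi (1:ℝ) by simp only [mem_Ioi]; linarith),
          indicator_of_mem (show x ∈ Iio (-1:ℝ) from hx)]
        simp [abs_neg]
      · rw [indicator_of_notMem (show -x ∉ Ioi (1:ℝ) by simp only [mem_Ioi]; push_neg; linarith [not_lt.mp hx]),
          indicator_of_notMem (show x ∉ Iio (-1:ℝ) by simpa using hx)]
    rw [heq] at this
    exact (integrable_indicator_iff measurableSet_Iio).mp this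
  have h4 : IntegrableOn (fun x : ℝ => (1 + |x|) ^ (-p)) (Icc (-1) 1) :=
    hcont.integrableOn_Icc
  have : IntegrableOn (fun x : ℝ => (1 + |x|) ^ (-p)) (Iio (-1) ∪ (Icc (-1) 1 ∪ Ioi 1)) :=
    h3.union (h4.union h2)
  rw [← integrableOn_univ]
  refine this.mono_set fun x _ => ?_
  rcases lt_or_ge x (-1) with h | h
  · exact Or.inl h
  · rcases le_or_gt x 1 with h' | h'
    · exact Or.inr (Or.inl ⟨h, h'⟩)
    · exact Or.inr (Or.inr h')

lemma myDiffAt_conj_conj {g : ℂ → ℂ} {z : ℂ} (h : DifferentiableAt ℂ g ((starRingEnd ℂ) z)) :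
    DifferentiableAt ℂ (fun w => (starRingEnd ℂ) (g ((starRingEnd ℂ) w))) z := by
  have hd := h.hasDerivAt
  set g' := deriv g ((starRingEnd ℂ) z) with hg'
  have : HasDerivAt (fun w => (starRingEnd ℂ) (g ((starRingEnd ℂ) w))) ((starRingEnd ℂ) g') z := by
    rw [hasDerivAt_iff_tendsto] at hd ⊢
    have hc : Tendsto (fun w : ℂ => (starRingEnd ℂ) w) (𝓝 z) (𝓝 ((starRingEnd ℂ) z)) :=
      (Complex.continuous_conj.tendsto z)
    refine (hd.comp hc).congr fun w => ?_
    simp only [Function.comp]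
    have h1 : ‖(starRingEnd ℂ) w - (starRingEnd ℂ) z‖ = ‖w - z‖ := by
      rw [← map_sub]; exact RCLike.norm_conj _
    rw [h1]
    congr 1
    have : g ((starRingEnd ℂ) w) - g ((starRingEnd ℂ) z) - ((starRingEnd ℂ) w - (starRingEnd ℂ) z) • g'
        = (starRingEnd ℂ) ((starRingEnd ℂ) (g ((starRingEnd ℂ) w)) - (starRingEnd ℂ) (g ((starRingEnd ℂ) z)) - (w - z) • (starRingEnd ℂ) g') := by
      simp only [smul_eq_mul, map_sub, map_mul, Complex.conj_conj]
    rw [this, RCLike.norm_conj]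
  exact this.differentiableAt

/-- Orthogonality of upper and lower boundary values: for Z analytic off ℝ with continuous
boundary values Z₊, Z₋ and decay ‖Z(ζ)‖ ≤ c(1+|ζ|)^{-3/4}, one has ∫_ℝ Z₊(s) Z₋(s)* ds = 0. -/
theorem boundary_values_orthogonality
    (Z : ℂ → Mat2) (Zp Zm : ℝ → Mat2)
    (han : ∀ z : ℂ, z.im ≠ 0 → ∀ i j, DifferentiableAt ℂ (fun w => Z w i j) z)
    (hbvp : ∀ (x : ℝ) i j, Filter.Tendsto (fun δ : ℝ => Z ((x:ℂ) + (δ:ℂ) * Complex.I) i j)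
      (𝓝[>] (0:ℝ)) (𝓝 (Zp x i j)))
    (hbvm : ∀ (x : ℝ) i j, Filter.Tendsto (fun δ : ℝ => Z ((x:ℂ) - (δ:ℂ) * Complex.I) i j)
      (𝓝[>] (0:ℝ)) (𝓝 (Zm x i j)))
    (hcp : ∀ i j, Continuous (fun x : ℝ => Zp x i j))
    (hcm : ∀ i j, Continuous (fun x : ℝ => Zm x i j))
    (c : ℝ)
    (hdecay : ∀ z : ℂ, z.im ≠ 0 → ∀ i j,
      ‖Z z i j‖ ≤ c * (1 + ‖z‖) ^ (-(3:ℝ)/4)) :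
    ∀ i j, (∫ s : ℝ, (Zp s * (Zm s).conjTranspose) i j) = 0 := by
  intro i j
  -- decay in norm form
  have hdecay' : ∀ z : ℂ, z.im ≠ 0 → ∀ i' j', ‖Z z i' j'‖ ≤ c * (1 + ‖z‖) ^ (-(3/4:ℝ)) := by
    intro z hz i' j'
    have := hdecay z hz i' j'
    rw [show (-(3:ℝ)/4) = (-(3/4:ℝ)) by norm_num] at this
    simpa using this
  have hc0 : 0 ≤ c := by
    have h := hdecay Complex.I (by simp) 0 0
    have hp : (0:ℝ) < (1 + ‖Complex.I‖) ^ (-(3:ℝ)/4) :=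
      Real.rpow_pos_of_pos (by positivity) _
    nlinarith [norm_nonneg (Z Complex.I 0 0)]
  set F : ℂ → ℂ :=
    fun z => ∑ k : Fin 2, Z z i k * (starRingEnd ℂ) (Z ((starRingEnd ℂ) z) j k) with hF
  set G : ℝ → ℂ := fun s => ∑ k : Fin 2, Zp s i k * (starRingEnd ℂ) (Zm s j k) with hG
  have hgoal : (fun s : ℝ => (Zp s * (Zm s).conjTranspose) i j) = G := by
    funext s; simp [hG, Matrix.mul_apply, Matrix.conjTranspose_apply]
  rw [show (∫ s : ℝ, (Zp s * (Zm s).conjTranspose) i j) = ∫ s : ℝ, G s by rw [hgoal]]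
  -- bound on F
  have hFb : ∀ z : ℂ, z.im ≠ 0 → ‖F z‖ ≤ 2 * c ^ 2 * (1 + ‖z‖) ^ (-(3/2:ℝ)) := by
    intro z hz
    have hz' : ((starRingEnd ℂ) z).im ≠ 0 := by
      simpa [Complex.conj_im] using hz
    have habs : ‖(starRingEnd ℂ) z‖ = ‖z‖ := RCLike.norm_conj z
    have hterm : ∀ k : Fin 2,
        ‖Z z i k * (starRingEnd ℂ) (Z ((starRingEnd ℂ) z) j k)‖
          ≤ c ^ 2 * (1 + ‖z‖) ^ (-(3/2:ℝ)) := by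
      intro k
      rw [norm_mul, RCLike.norm_conj]
      have h1 := hdecay' z hz i k
      have h2 := hdecay' _ hz' j k
      rw [habs] at h2
      have hXpos : (0:ℝ) < 1 + ‖z‖ := by positivity
      have hXX : (1 + ‖z‖) ^ (-(3/4:ℝ)) * (1 + ‖z‖) ^ (-(3/4:ℝ)) = (1 + ‖z‖) ^ (-(3/2:ℝ)) := by
        rw [← Real.rpow_add hXpos]; norm_num
      calc ‖Z z i k‖ * ‖Z ((starRingEnd ℂ) z) j k‖
          ≤ (c * (1 + ‖z‖) ^ (-(3/4:ℝ))) * (c * (1 + ‖z‖) ^ (-(3/4:ℝ))) :=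
            mul_le_mul h1 h2 (norm_nonneg _) (by positivity)
        _ = c ^ 2 * (1 + ‖z‖) ^ (-(3/2:ℝ)) := by rw [← hXX]; ring
    calc ‖F z‖ ≤ ∑ k : Fin 2, ‖Z z i k * (starRingEnd ℂ) (Z ((starRingEnd ℂ) z) j k)‖ := by
          rw [hF]; exact norm_sum_le _ _
      _ ≤ ∑ _k : Fin 2, c ^ 2 * (1 + ‖z‖) ^ (-(3/2:ℝ)) :=
          Finset.sum_le_sum fun k _ => hterm k
      _ = 2 * c ^ 2 * (1 + ‖z‖) ^ (-(3/2:ℝ)) := by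
          simp [Finset.sum_const, Finset.card_univ]; ring
  -- differentiability of F off the real axis
  have hFd : ∀ z : ℂ, z.im ≠ 0 → DifferentiableAt ℂ F z := by
    intro z hz
    have hz' : ((starRingEnd ℂ) z).im ≠ 0 := by simpa [Complex.conj_im] using hz
    rw [hF]
    refine DifferentiableAt.fun_sum fun k _ => ?_
    exact (han z hz i k).mul (myDiffAt_conj_conj (han _ hz' j k))
  -- boundary values of F
  have hconj_eq : ∀ (x δ : ℝ),
      (starRingEnd ℂ) ((x:ℂ) + (δ:ℂ) * Complex.I) = (x:ℂ) - (δ:ℂ) * Complex.I := by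
    intro x δ; simp [Complex.ext_iff]
  have hGlim : ∀ x : ℝ, Tendsto (fun δ : ℝ => F ((x:ℂ) + (δ:ℂ) * Complex.I))
      (𝓝[>] (0:ℝ)) (𝓝 (G x)) := by
    intro x
    rw [hF, hG]
    refine tendsto_finset_sum _ fun k _ => ?_
    refine Tendsto.mul (hbvp x i k) ?_
    have h2 : Tendsto (fun δ : ℝ => (starRingEnd ℂ) (Z ((x:ℂ) - (δ:ℂ) * Complex.I) j k))
        (𝓝[>] (0:ℝ)) (𝓝 ((starRingEnd ℂ) (Zm x j k))) :=
      (Complex.continuous_conj.tendsto _).comp (hbvm x j k)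
    refine h2.congr fun δ => ?_
    rw [hconj_eq]
  -- bound on G
  have hGb : ∀ x : ℝ, ‖G x‖ ≤ 2 * c ^ 2 * (1 + |x|) ^ (-(3/2:ℝ)) := by
    intro x
    refine le_of_tendsto ((continuous_norm.tendsto _).comp (hGlim x)) ?_
    filter_upwards [self_mem_nhdsWithin] with δ (hδ : 0 < δ)
    have him : ((x:ℂ) + (δ:ℂ) * Complex.I).im ≠ 0 := by
      simpa using ne_of_gt hδ
    refine (hFb _ him).trans ?_
    refine mul_le_mul_of_nonneg_left ?_ (by positivity)
    refine Real.rpow_le_rpow_of_nonpos (by positivity) ?_ (by norm_num)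
    have : |x| ≤ ‖(x:ℂ) + (δ:ℂ) * Complex.I‖ := by
      have := Complex.abs_re_le_norm ((x:ℂ) + (δ:ℂ) * Complex.I)
      simpa using this
    linarith
  have hGcont : Continuous G := by
    rw [hG]
    exact continuous_finset_sum _ fun k _ =>
      (hcp i k).mul (Complex.continuous_conj.comp (hcm j k))
  have hGint : Integrable G := by
    refine Integrable.mono'
      ((myIntegrable_one_add_abs_rpow (show (1:ℝ) < 3/2 by norm_num)).const_mul (2 * c ^ 2))
      hGcont.aestronglyMeasurable (ae_of_all _ fun x => ?_)
    exact hGb x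
  -- the constant I₀
  have hint54 : Integrable (fun x : ℝ => (1 + |x|) ^ (-(5/4:ℝ))) :=
    myIntegrable_one_add_abs_rpow (show (1:ℝ) < 5/4 by norm_num)
  set C1 : ℝ := ∫ x : ℝ, (1 + |x|) ^ (-(5/4:ℝ)) with hC1
  have hC1nonneg : 0 ≤ C1 := integral_nonneg fun x => Real.rpow_nonneg (by positivity) _
  -- side estimate
  have hside : ∀ (xr T δ : ℝ), 0 < δ → δ ≤ T →
      ‖∫ y in δ..T, F ((xr:ℂ) + (y:ℂ) * Complex.I)‖
        ≤ 2 * c ^ 2 * (1 + |xr|) ^ (-(3/2:ℝ)) * T := by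
    intro xr T δ hδ hδT
    have hb : ∀ y ∈ Set.uIoc δ T, ‖F ((xr:ℂ) + (y:ℂ) * Complex.I)‖
        ≤ 2 * c ^ 2 * (1 + |xr|) ^ (-(3/2:ℝ)) := by
      intro y hy
      rw [uIoc_of_le hδT] at hy
      have hy0 : 0 < y := lt_trans hδ hy.1
      have him : ((xr:ℂ) + (y:ℂ) * Complex.I).im ≠ 0 := by simpa using ne_of_gt hy0
      refine (hFb _ him).trans ?_
      refine mul_le_mul_of_nonneg_left ?_ (by positivity)
      refine Real.rpow_le_rpow_of_nonpos (by positivity) ?_ (by norm_num)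
      have : |xr| ≤ ‖(xr:ℂ) + (y:ℂ) * Complex.I‖ := by
        have := Complex.abs_re_le_norm ((xr:ℂ) + (y:ℂ) * Complex.I)
        simpa using this
      linarith
    refine (intervalIntegral.norm_integral_le_of_norm_le_const hb).trans ?_
    rw [_root_.abs_of_nonneg (by linarith : (0:ℝ) ≤ T - δ)]
    refine mul_le_mul_of_nonneg_left (by linarith) (by positivity)
  -- top estimate
  have htop : ∀ (R T : ℝ), 0 ≤ R → 0 < T →
      ‖∫ x in (-R)..R, F ((x:ℂ) + (T:ℂ) * Complex.I)‖
        ≤ 2 * c ^ 2 * (1 + T) ^ (-(1/4:ℝ)) * C1 := by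
    intro R T hR hT
    set g : ℝ → ℝ := fun x => 2 * c ^ 2 * (1 + T) ^ (-(1/4:ℝ)) * (1 + |x|) ^ (-(5/4:ℝ)) with hg
    have hgint : Integrable g := hint54.const_mul _
    have hbd : ∀ x : ℝ, ‖F ((x:ℂ) + (T:ℂ) * Complex.I)‖ ≤ g x := by
      intro x
      have him : ((x:ℂ) + (T:ℂ) * Complex.I).im ≠ 0 := by simpa using ne_of_gt hT
      refine (hFb _ him).trans ?_
      set z : ℂ := (x:ℂ) + (T:ℂ) * Complex.I
      have hre : |x| ≤ ‖z‖ := by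
        have := Complex.abs_re_le_norm z
        simp only [z] at this ⊢; simpa using this
      have him' : T ≤ ‖z‖ := by
        have := Complex.abs_im_le_norm z
        simp only [z] at this ⊢
        have h2 : |T| ≤ ‖(x:ℂ) + (T:ℂ) * Complex.I‖ := by simpa using this
        calc T ≤ |T| := le_abs_self T
          _ ≤ _ := h2
      have hsplit : (1 + ‖z‖) ^ (-(3/2:ℝ)) = (1 + ‖z‖) ^ (-(1/4:ℝ)) * (1 + ‖z‖) ^ (-(5/4:ℝ)) := by
        rw [← Real.rpow_add (by positivity)]; norm_num
      rw [hsplit, hg]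
      have h1 : (1 + ‖z‖) ^ (-(1/4:ℝ)) ≤ (1 + T) ^ (-(1/4:ℝ)) :=
        Real.rpow_le_rpow_of_nonpos (by positivity) (by linarith) (by norm_num)
      have h2 : (1 + ‖z‖) ^ (-(5/4:ℝ)) ≤ (1 + |x|) ^ (-(5/4:ℝ)) :=
        Real.rpow_le_rpow_of_nonpos (by positivity) (by linarith) (by norm_num)
      calc 2 * c ^ 2 * ((1 + ‖z‖) ^ (-(1/4:ℝ)) * (1 + ‖z‖) ^ (-(5/4:ℝ)))
          ≤ 2 * c ^ 2 * ((1 + T) ^ (-(1/4:ℝ)) * (1 + |x|) ^ (-(5/4:ℝ))) := by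
            refine mul_le_mul_of_nonneg_left ?_ (by positivity)
            exact mul_le_mul h1 h2 (Real.rpow_nonneg (by positivity) _) (Real.rpow_nonneg (by positivity) _)
        _ = 2 * c ^ 2 * (1 + T) ^ (-(1/4:ℝ)) * (1 + |x|) ^ (-(5/4:ℝ)) := by ring
    have step1 : ‖∫ x in (-R)..R, F ((x:ℂ) + (T:ℂ) * Complex.I)‖ ≤ ∫ x in (-R)..R, g x := by
      have := intervalIntegral.norm_integral_le_abs_of_norm_le
        (μ := volume) (a := -R) (b := R) (f := fun x : ℝ => F ((x:ℂ) + (T:ℂ) * Complex.I))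
        (ae_of_all _ fun x => hbd x) hgint.intervalIntegrable
      refine this.trans ?_
      rw [_root_.abs_of_nonneg (intervalIntegral.integral_nonneg (by linarith : -R ≤ R)
        (fun x _ => by positivity))]
    refine step1.trans ?_
    have step2 : (∫ x in (-R)..R, g x) ≤ ∫ x : ℝ, g x := by
      rw [intervalIntegral.integral_of_le (by linarith : -R ≤ R)]
      exact setIntegral_le_integral hgint
        (ae_of_all _ fun x => by positivity)
    refine step2.trans ?_
    rw [hg]
    rw [MeasureTheory.integral_const_mul]
  -- main claim for finite rectangles
  have hclaim : ∀ R T : ℝ, 0 < R → 1 ≤ T →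
      ‖∫ x in (-R)..R, G x‖ ≤ 2 * c ^ 2 * (1 + T) ^ (-(1/4:ℝ)) * C1
        + 2 * (2 * c ^ 2 * (1 + R) ^ (-(3/2:ℝ)) * T) := by
    intro R T hR hT
    have hT0 : (0:ℝ) < T := by linarith
    have hBtend : Tendsto (fun δ : ℝ => ∫ x in (-R)..R, F ((x:ℂ) + (δ:ℂ) * Complex.I))
        (𝓝[>] (0:ℝ)) (𝓝 (∫ x in (-R)..R, G x)) := by
      apply intervalIntegral.tendsto_integral_filter_of_dominated_convergence
        (bound := fun _ => 2 * c ^ 2)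
      · filter_upwards [self_mem_nhdsWithin] with δ (hδ : 0 < δ)
        refine (Continuous.aestronglyMeasurable ?_).restrict
        refine continuous_iff_continuousAt.mpr fun x => ?_
        have him : ((x:ℂ) + (δ:ℂ) * Complex.I).im ≠ 0 := by simpa using ne_of_gt hδ
        have hc2 : ContinuousAt (fun x : ℝ => (x:ℂ) + (δ:ℂ) * Complex.I) x :=
          (Complex.continuous_ofReal.add continuous_const).continuousAt
        have hc3 : ContinuousAt (F ∘ fun x : ℝ => (x:ℂ) + (δ:ℂ) * Complex.I) x :=
          ContinuousAt.comp ((hFd _ him).continuousAt) hc2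
        exact hc3
      · filter_upwards [self_mem_nhdsWithin] with δ (hδ : 0 < δ)
        refine ae_of_all _ fun x _ => ?_
        have him : ((x:ℂ) + (δ:ℂ) * Complex.I).im ≠ 0 := by simpa using ne_of_gt hδ
        refine (hFb _ him).trans ?_
        have h1 : (1 + ‖(x:ℂ) + (δ:ℂ) * Complex.I‖) ^ (-(3/2:ℝ)) ≤ 1 :=
          Real.rpow_le_one_of_one_le_of_nonpos (le_add_of_nonneg_right (norm_nonneg _)) (by norm_num)
        calc 2 * c ^ 2 * (1 + ‖(x:ℂ) + (δ:ℂ) * Complex.I‖) ^ (-(3/2:ℝ))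
            ≤ 2 * c ^ 2 * 1 := mul_le_mul_of_nonneg_left h1 (by positivity)
          _ = 2 * c ^ 2 := mul_one _
      · exact intervalIntegrable_const
      · exact ae_of_all _ fun x _ => hGlim x
    refine le_of_tendsto hBtend.norm ?_
    filter_upwards [Ioo_mem_nhdsGT_of_mem (show (0:ℝ) ∈ Ico 0 T from ⟨le_refl _, hT0⟩)]
      with δ hδ
    obtain ⟨hδ0, hδT⟩ := hδ
    have hdiff : DifferentiableOn ℂ F
        ((Set.uIcc ((⟨-R, δ⟩:ℂ)).re ((⟨R, T⟩:ℂ)).re) ×ℂ (Set.uIcc ((⟨-R, δ⟩:ℂ)).im ((⟨R, T⟩:ℂ)).im)) := by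
      intro z hz
      rw [Complex.mem_reProdIm] at hz
      have him : z.im ∈ Set.uIcc δ T := hz.2
      rw [uIcc_of_le (le_of_lt hδT)] at him
      exact (hFd z (ne_of_gt (lt_of_lt_of_le hδ0 him.1))).differentiableWithinAt
    have hcauchy := Complex.integral_boundary_rect_eq_zero_of_differentiableOn F
      ⟨-R, δ⟩ ⟨R, T⟩ hdiff
    have e1 : ((⟨-R, δ⟩:ℂ)).re = -R := rfl
    have e2 : ((⟨-R, δ⟩:ℂ)).im = δ := rfl
    have e3 : ((⟨R, T⟩:ℂ)).re = R := rfl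
    have e4 : ((⟨R, T⟩:ℂ)).im = T := rfl
    rw [e1, e2, e3, e4] at hcauchy
    have hrearr : (∫ x in (-R)..R, F ((x:ℂ) + (δ:ℂ) * Complex.I))
        = (∫ x in (-R)..R, F ((x:ℂ) + (T:ℂ) * Complex.I))
          - Complex.I • (∫ y in δ..T, F ((R:ℂ) + (y:ℂ) * Complex.I))
          + Complex.I • (∫ y in δ..T, F (((-R:ℝ):ℂ) + (y:ℂ) * Complex.I)) := by
      simp only [smul_eq_mul] at hcauchy ⊢
      linear_combination hcauchy
    rw [hrearr]
    have hnorm1 := htop R T (le_of_lt hR) hT0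
    have hnorm2 := hside R T δ hδ0 (le_of_lt hδT)
    have hnorm3 := hside (-R) T δ hδ0 (le_of_lt hδT)
    rw [abs_of_pos hR] at hnorm2
    rw [abs_neg, abs_of_pos hR] at hnorm3
    calc ‖_ - Complex.I • _ + Complex.I • _‖
        ≤ ‖(∫ x in (-R)..R, F ((x:ℂ) + (T:ℂ) * Complex.I))
            - Complex.I • (∫ y in δ..T, F ((R:ℂ) + (y:ℂ) * Complex.I))‖
          + ‖Complex.I • (∫ y in δ..T, F (((-R:ℝ):ℂ) + (y:ℂ) * Complex.I))‖ := norm_add_le _ _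
      _ ≤ ‖(∫ x in (-R)..R, F ((x:ℂ) + (T:ℂ) * Complex.I))‖
          + ‖Complex.I • (∫ y in δ..T, F ((R:ℂ) + (y:ℂ) * Complex.I))‖
          + ‖Complex.I • (∫ y in δ..T, F (((-R:ℝ):ℂ) + (y:ℂ) * Complex.I))‖ := by
            have := norm_sub_le (∫ x in (-R)..R, F ((x:ℂ) + (T:ℂ) * Complex.I))
              (Complex.I • (∫ y in δ..T, F ((R:ℂ) + (y:ℂ) * Complex.I)))
            linarith
      _ ≤ 2 * c ^ 2 * (1 + T) ^ (-(1/4:ℝ)) * C1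
          + 2 * (2 * c ^ 2 * (1 + R) ^ (-(3/2:ℝ)) * T) := by
            rw [norm_smul, norm_smul, Complex.norm_I, one_mul, one_mul]
            linarith
  -- take R → ∞
  have hRtend : Tendsto (fun R : ℝ => ∫ x in (-R)..R, G x) atTop (𝓝 (∫ x : ℝ, G x)) :=
    intervalIntegral_tendsto_integral hGint tendsto_neg_atTop_atBot tendsto_id
  have hTbound : ∀ T : ℝ, 1 ≤ T → ‖∫ x : ℝ, G x‖ ≤ 2 * c ^ 2 * (1 + T) ^ (-(1/4:ℝ)) * C1 := by
    intro T hT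
    have h2 : Tendsto (fun R : ℝ => 2 * c ^ 2 * (1 + T) ^ (-(1/4:ℝ)) * C1
        + 2 * (2 * c ^ 2 * (1 + R) ^ (-(3/2:ℝ)) * T)) atTop
        (𝓝 (2 * c ^ 2 * (1 + T) ^ (-(1/4:ℝ)) * C1)) := by
      have h3 : Tendsto (fun R : ℝ => (1 + R) ^ (-(3/2:ℝ))) atTop (𝓝 0) :=
        (tendsto_rpow_neg_atTop (by norm_num : (0:ℝ) < 3/2)).comp
          (tendsto_atTop_add_const_left _ 1 tendsto_id)
      have h4 : Tendsto (fun R : ℝ => 2 * (2 * c ^ 2 * (1 + R) ^ (-(3/2:ℝ)) * T)) atTop (𝓝 0) := by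
        simpa using (((h3.const_mul (2 * c ^ 2)).mul_const T).const_mul 2)
      simpa using (tendsto_const_nhds (x := 2 * c ^ 2 * (1 + T) ^ (-(1/4:ℝ)) * C1)
        (f := atTop)).add h4
    refine le_of_tendsto_of_tendsto hRtend.norm h2 ?_
    filter_upwards [eventually_gt_atTop (0:ℝ)] with R hR
    exact hclaim R T hR hT
  -- take T → ∞
  have hfin : Tendsto (fun T : ℝ => 2 * c ^ 2 * (1 + T) ^ (-(1/4:ℝ)) * C1) atTop (𝓝 0) := by
    have h3 : Tendsto (fun T : ℝ => (1 + T) ^ (-(1/4:ℝ))) atTop (𝓝 0) :=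
      (tendsto_rpow_neg_atTop (by norm_num : (0:ℝ) < 1/4)).comp
        (tendsto_atTop_add_const_left _ 1 tendsto_id)
    have := (h3.const_mul (2 * c ^ 2)).mul_const C1
    simpa using this
  have hzero : ‖∫ x : ℝ, G x‖ ≤ 0 := by
    refine le_of_tendsto_of_tendsto tendsto_const_nhds hfin ?_
    filter_upwards [eventually_ge_atTop (1:ℝ)] with T hT
    exact hTbound T hT
  simpa using norm_le_zero_iff.mp hzero
end
end

section
/- Lemma (continuity of the RHP← jump matrices in the parameter). Fix α ≤ 0 and let γ± = {r e^{±2πi/3} : r > 0}. For β ≤ 0 define h_{α,β}(z) = exp((4/3)z^{3/2}) · ( exp(2βz^{1/2}) − exp(2αz^{1/2}) ) (principal branches). Then there is a constant C = C(α) such that for all β ≤ 0 with |β − α| ≤ 1: sup_{z ∈ γ±} |h_{α,β}(z)| ≤ C|β − α| and ∫₀^∞ |h_{α,β}(r e^{±2πi/3})|² dr ≤ C²|β − α|². In particular the L^∞ and L² norms of h_{α,β} on γ± tend to 0 as β → α. -/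
noncomputable section

open Complex MeasureTheory Filter Topology Set

/-- The (2,1) entry of the difference of the RHP← jump matrices at parameter values b and a:
h_{a,b}(z) = e^{(4/3)z^{3/2}}·(e^{2bz^{1/2}} - e^{2az^{1/2}}) (principal branches). -/
def jumpDiff (a b : ℝ) (z : ℂ) : ℂ :=
  Complex.exp ((4/3) * z ^ ((3:ℂ)/2)) *
    (Complex.exp (2 * (b:ℂ) * z ^ ((1:ℂ)/2)) - Complex.exp (2 * (a:ℂ) * z ^ ((1:ℂ)/2)))

set_option maxHeartbeats 1000000 in
lemma rayCpow (r θ c : ℝ) (hr : 0 < r) (hθ : θ ∈ Set.Ioc (-Real.pi) Real.pi) :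
    ((r:ℂ) * Complex.exp ((θ:ℂ) * Complex.I)) ^ ((c:ℝ):ℂ)
      = ((r ^ c : ℝ) : ℂ) * Complex.exp (((c*θ : ℝ):ℂ) * Complex.I) := by
  have hz : ((r:ℂ) * Complex.exp ((θ:ℂ) * Complex.I)) ≠ 0 := by
    exact mul_ne_zero (by exact_mod_cast hr.ne') (Complex.exp_ne_zero _)
  have habs : ‖(r:ℂ) * Complex.exp ((θ:ℂ) * Complex.I)‖ = r := by
    simp [Complex.norm_exp, abs_of_pos hr]
  have harg : Complex.arg ((r:ℂ) * Complex.exp ((θ:ℂ) * Complex.I)) = θ := by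
    rw [Complex.exp_mul_I]
    exact Complex.arg_mul_cos_add_sin_mul_I hr hθ
  have hlog : Complex.log ((r:ℂ) * Complex.exp ((θ:ℂ) * Complex.I))
      = ((Real.log r : ℝ):ℂ) + (θ:ℂ) * Complex.I := by
    rw [Complex.log, habs, harg]
  rw [Complex.cpow_def_of_ne_zero hz, hlog]
  have : (((Real.log r : ℝ):ℂ) + (θ:ℂ) * Complex.I) * ((c:ℝ):ℂ)
      = ((c * Real.log r : ℝ):ℂ) + ((c*θ : ℝ):ℂ) * Complex.I := by
    push_cast; ring
  rw [this, Complex.exp_add]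
  congr 1
  rw [← Complex.ofReal_exp, Real.rpow_def_of_pos hr]
  norm_num [mul_comm]

lemma expDiffBound (w : ℂ) (hw : 0 ≤ w.re) {a b : ℝ} (ha : a ≤ 0) (hb : b ≤ 0) :
    ‖Complex.exp (2*(b:ℂ)*w) - Complex.exp (2*(a:ℂ)*w)‖
      ≤ 2 * ‖w‖ * |b - a| := by
  have hder : ∀ t ∈ Set.Iic (0:ℝ),
      HasDerivWithinAt (fun t:ℝ => Complex.exp (2*(t:ℂ)*w))
        (2*w*Complex.exp (2*(t:ℂ)*w)) (Set.Iic 0) t := by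
    intro t ht
    have h1 : HasDerivAt (fun u : ℂ => Complex.exp (2*u*w))
        (Complex.exp (2*(t:ℂ)*w) * (2*1*w)) (t:ℂ) := by
      exact (((hasDerivAt_id (t:ℂ)).const_mul (2:ℂ)).mul_const w).cexp
    have h2 := h1.comp_ofReal
    have : Complex.exp (2*(t:ℂ)*w) * (2*1*w) = 2*w*Complex.exp (2*(t:ℂ)*w) := by ring
    rw [this] at h2
    exact h2.hasDerivWithinAt
  have hbound : ∀ t ∈ Set.Iic (0:ℝ), ‖2*w*Complex.exp (2*(t:ℂ)*w)‖ ≤ 2 * ‖w‖ := by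
    intro t ht
    have : ‖2*w*Complex.exp (2*(t:ℂ)*w)‖ = 2 * ‖w‖ * Real.exp ((2*(t:ℂ)*w).re) := by
      simp [Complex.norm_exp]
    rw [this]
    have hre : (2*(t:ℂ)*w).re ≤ 0 := by
      have : (2*(t:ℂ)*w).re = 2 * t * w.re := by simp [Complex.mul_re]
      rw [this]
      have : 2 * t ≤ 0 := by linarith [mem_Iic.mp ht]
      exact mul_nonpos_of_nonpos_of_nonneg this hw
    calc 2 * ‖w‖ * Real.exp ((2*(t:ℂ)*w).re)
        ≤ 2 * ‖w‖ * 1 := by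
          apply mul_le_mul_of_nonneg_left _ (by positivity)
          simpa using Real.exp_le_one_iff.mpr hre
      _ = 2 * ‖w‖ := by ring
  have := (convex_Iic (0:ℝ)).norm_image_sub_le_of_norm_hasDerivWithin_le
    hder hbound (mem_Iic.mpr ha) (mem_Iic.mpr hb)
  simpa [Real.norm_eq_abs] using this

/-- Master pointwise bound on a ray. -/
lemma jumpDiff_ray_bound (a b r θ : ℝ) (ha : a ≤ 0) (hb : b ≤ 0) (hr : 0 < r)
    (hθ : θ ∈ Set.Ioc (-Real.pi) Real.pi)
    (h32 : Complex.exp (((3/2*θ : ℝ):ℂ) * Complex.I) = -1)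
    (hcos : 0 ≤ Real.cos (1/2*θ)) :
    ‖jumpDiff a b ((r:ℂ) * Complex.exp ((θ:ℂ)*Complex.I))‖
      ≤ 2 * r ^ ((1:ℝ)/2) * Real.exp (-(4/3) * r ^ ((3:ℝ)/2)) * |b - a| := by
  set z := (r:ℂ) * Complex.exp ((θ:ℂ)*Complex.I) with hzdef
  have e32 : ((3:ℂ)/2) = (((3/2:ℝ)):ℂ) := by norm_num
  have e12 : ((1:ℂ)/2) = (((1/2:ℝ)):ℂ) := by norm_num
  have h3 : z ^ ((3:ℂ)/2) = -((r ^ ((3:ℝ)/2) : ℝ) : ℂ) := by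
    rw [e32, rayCpow r θ (3/2) hr hθ, h32]; ring
  have h1 : z ^ ((1:ℂ)/2)
      = ((r ^ ((1:ℝ)/2) : ℝ) : ℂ) * Complex.exp (((1/2*θ : ℝ):ℂ) * Complex.I) := by
    rw [e12, rayCpow r θ (1/2) hr hθ]
  set w := ((r ^ ((1:ℝ)/2) : ℝ) : ℂ) * Complex.exp (((1/2*θ : ℝ):ℂ) * Complex.I) with hwdef
  have hx : (0:ℝ) ≤ r ^ ((1:ℝ)/2) := Real.rpow_nonneg hr.le _
  have hwre : 0 ≤ w.re := by
    have : w.re = r ^ ((1:ℝ)/2) * Real.cos (1/2*θ) := by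
      rw [hwdef, Complex.exp_mul_I, ← Complex.ofReal_cos, ← Complex.ofReal_sin]
      simp only [Complex.mul_re, Complex.add_re, Complex.ofReal_re, Complex.ofReal_im,
        Complex.add_im, Complex.mul_im, Complex.I_re, Complex.I_im]
      ring
    rw [this]
    exact mul_nonneg hx hcos
  have hwabs : ‖w‖ = r ^ ((1:ℝ)/2) := by
    rw [hwdef, norm_mul, Complex.norm_exp]
    simp [_root_.abs_of_nonneg hx, Real.rpow_nonneg hr.le]
  have hexp : ‖Complex.exp ((4/3) * z ^ ((3:ℂ)/2))‖
      = Real.exp (-(4/3) * r ^ ((3:ℝ)/2)) := by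
    rw [h3]
    have : (4/3 : ℂ) * (-((r ^ ((3:ℝ)/2) : ℝ) : ℂ)) = ((-(4/3) * r ^ ((3:ℝ)/2) : ℝ) : ℂ) := by
      push_cast; ring
    rw [this, Complex.norm_exp, Complex.ofReal_re]
  have hdiff : ‖Complex.exp (2 * (b:ℂ) * z ^ ((1:ℂ)/2))
        - Complex.exp (2 * (a:ℂ) * z ^ ((1:ℂ)/2))‖
      ≤ 2 * r ^ ((1:ℝ)/2) * |b - a| := by
    rw [h1]
    have := expDiffBound w hwre ha hb
    rw [hwabs] at this
    exact this
  rw [jumpDiff, norm_mul, hexp]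
  calc Real.exp (-(4/3) * r ^ ((3:ℝ)/2)) * ‖_‖
      ≤ Real.exp (-(4/3) * r ^ ((3:ℝ)/2)) * (2 * r ^ ((1:ℝ)/2) * |b - a|) :=
        mul_le_mul_of_nonneg_left hdiff (Real.exp_nonneg _)
    _ = 2 * r ^ ((1:ℝ)/2) * Real.exp (-(4/3) * r ^ ((3:ℝ)/2)) * |b - a| := by ring

lemma env_sup (r : ℝ) (hr : 0 < r) :
    2 * r ^ ((1:ℝ)/2) * Real.exp (-(4/3) * r ^ ((3:ℝ)/2)) ≤ Real.exp 2 := by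
  set t := r ^ ((1:ℝ)/2) with htdef
  have ht : 0 ≤ t := Real.rpow_nonneg hr.le _
  have h3 : r ^ ((3:ℝ)/2) = t^3 := by
    rw [htdef, ← Real.rpow_natCast (r ^ ((1:ℝ)/2)) 3, ← Real.rpow_mul hr.le]
    norm_num
  rw [h3]
  have h2t : 2*t ≤ Real.exp ((4/3)*t^3 + 2) := by
    have h1 : 2*t ≤ (4/3)*t^3 + 2 + 1 := by nlinarith [sq_nonneg (t-1), mul_nonneg ht (sq_nonneg (t-1))]
    linarith [Real.add_one_le_exp ((4/3)*t^3 + 2)]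
  calc 2*t*Real.exp (-(4/3)*t^3)
      ≤ Real.exp ((4/3)*t^3 + 2) * Real.exp (-(4/3)*t^3) :=
        mul_le_mul_of_nonneg_right h2t (Real.exp_nonneg _)
    _ = Real.exp 2 := by rw [← Real.exp_add]; congr 1; ring

lemma env_sq (r : ℝ) (hr : 0 < r) :
    (2 * r ^ ((1:ℝ)/2) * Real.exp (-(4/3) * r ^ ((3:ℝ)/2)))^2
      ≤ Real.exp 4 * Real.exp (-r) := by
  set t := r ^ ((1:ℝ)/2) with htdef
  have ht : 0 ≤ t := Real.rpow_nonneg hr.le _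
  have h3 : r ^ ((3:ℝ)/2) = t^3 := by
    rw [htdef, ← Real.rpow_natCast (r ^ ((1:ℝ)/2)) 3, ← Real.rpow_mul hr.le]
    norm_num
  have h2 : r = t^2 := by
    rw [htdef, ← Real.rpow_natCast (r ^ ((1:ℝ)/2)) 2, ← Real.rpow_mul hr.le]
    norm_num
  rw [h3]
  conv_rhs => rw [h2]
  have h2t : (2*t)^2 ≤ Real.exp ((8/3)*t^3 + 4 - t^2) := by
    have h1 : (2*t)^2 ≤ (8/3)*t^3 + 4 - t^2 + 1 := by
      nlinarith [mul_nonneg ht (sq_nonneg (t-1)), sq_nonneg (t-1), sq_nonneg t]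
    linarith [Real.add_one_le_exp ((8/3)*t^3 + 4 - t^2)]
  have e2sq : Real.exp (-(4/3) * t^3) ^ 2 = Real.exp (-(8/3)*t^3) := by
    rw [sq, ← Real.exp_add]; congr 1; ring
  have expand : (2 * t * Real.exp (-(4/3) * t^3))^2
      = (2*t)^2 * Real.exp (-(8/3)*t^3) := by
    rw [mul_pow, e2sq]
  rw [expand]
  calc (2*t)^2 * Real.exp (-(8/3)*t^3)
      ≤ Real.exp ((8/3)*t^3 + 4 - t^2) * Real.exp (-(8/3)*t^3) :=
        mul_le_mul_of_nonneg_right h2t (Real.exp_nonneg _)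
    _ = Real.exp 4 * Real.exp (-t^2) := by rw [← Real.exp_add, ← Real.exp_add]; congr 1; ring

/-- Continuity of the RHP← jump matrices in the parameter: on the rays arg z = ±2π/3 the
difference of jump entries is O(|β-α|) in L^∞ and in L². -/
theorem jump_matrix_parameter_continuity (a : ℝ) (ha : a ≤ 0) :
    ∃ C : ℝ, ∀ b : ℝ, b ≤ 0 → |b - a| ≤ 1 →
      (∀ r : ℝ, 0 < r →
        ‖jumpDiff a b ((r:ℂ) * Complex.exp (2 * (Real.pi : ℂ) * Complex.I / 3))‖
          ≤ C * |b - a|) ∧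
      (∀ r : ℝ, 0 < r →
        ‖jumpDiff a b ((r:ℂ) * Complex.exp (-(2 * (Real.pi : ℂ) * Complex.I) / 3))‖
          ≤ C * |b - a|) ∧
      ((∫ r in Ioi (0:ℝ),
          (‖jumpDiff a b ((r:ℂ) * Complex.exp (2 * (Real.pi : ℂ) * Complex.I / 3))‖)^2)
        ≤ C^2 * |b - a|^2) ∧
      ((∫ r in Ioi (0:ℝ),
          (‖jumpDiff a b ((r:ℂ) * Complex.exp (-(2 * (Real.pi : ℂ) * Complex.I) / 3))‖)^2)
        ≤ C^2 * |b - a|^2) := by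
  refine ⟨Real.exp 2, fun b hb _ => ?_⟩
  have epos : (0:ℝ) < Real.pi := Real.pi_pos
  -- θ values
  have hθp : (2*Real.pi/3) ∈ Set.Ioc (-Real.pi) Real.pi := ⟨by nlinarith, by nlinarith⟩
  have hθm : (-(2*Real.pi/3)) ∈ Set.Ioc (-Real.pi) Real.pi := ⟨by nlinarith, by nlinarith⟩
  have ep : (2 * (Real.pi : ℂ) * Complex.I / 3) = ((2*Real.pi/3 : ℝ):ℂ) * Complex.I := by
    push_cast; ring
  have em : (-(2 * (Real.pi : ℂ) * Complex.I) / 3) = ((-(2*Real.pi/3) : ℝ):ℂ) * Complex.I := by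
    push_cast; ring
  have h32p : Complex.exp (((3/2*(2*Real.pi/3) : ℝ):ℂ) * Complex.I) = -1 := by
    have : (3/2*(2*Real.pi/3) : ℝ) = Real.pi := by ring
    rw [this, Complex.exp_pi_mul_I]
  have h32m : Complex.exp (((3/2*(-(2*Real.pi/3)) : ℝ):ℂ) * Complex.I) = -1 := by
    have : (3/2*(-(2*Real.pi/3)) : ℝ) = -Real.pi := by ring
    rw [this]
    push_cast
    rw [neg_mul, Complex.exp_neg, Complex.exp_pi_mul_I]
    norm_num
  have hcosp : 0 ≤ Real.cos (1/2*(2*Real.pi/3)) := by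
    have : (1/2*(2*Real.pi/3) : ℝ) = Real.pi/3 := by ring
    rw [this, Real.cos_pi_div_three]; norm_num
  have hcosm : 0 ≤ Real.cos (1/2*(-(2*Real.pi/3))) := by
    have : (1/2*(-(2*Real.pi/3)) : ℝ) = -(Real.pi/3) := by ring
    rw [this, Real.cos_neg, Real.cos_pi_div_three]; norm_num
  have boundp : ∀ r : ℝ, 0 < r →
      ‖jumpDiff a b ((r:ℂ) * Complex.exp (2 * (Real.pi : ℂ) * Complex.I / 3))‖
        ≤ 2 * r ^ ((1:ℝ)/2) * Real.exp (-(4/3) * r ^ ((3:ℝ)/2)) * |b - a| := by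
    intro r hr
    rw [ep]
    exact jumpDiff_ray_bound a b r (2*Real.pi/3) ha hb hr hθp h32p hcosp
  have boundm : ∀ r : ℝ, 0 < r →
      ‖jumpDiff a b ((r:ℂ) * Complex.exp (-(2 * (Real.pi : ℂ) * Complex.I) / 3))‖
        ≤ 2 * r ^ ((1:ℝ)/2) * Real.exp (-(4/3) * r ^ ((3:ℝ)/2)) * |b - a| := by
    intro r hr
    rw [em]
    exact jumpDiff_ray_bound a b r (-(2*Real.pi/3)) ha hb hr hθm h32m hcosm
  have supOf : ∀ (F : ℝ → ℝ), (∀ r : ℝ, 0 < r →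
      F r ≤ 2 * r ^ ((1:ℝ)/2) * Real.exp (-(4/3) * r ^ ((3:ℝ)/2)) * |b - a|) →
      ∀ r : ℝ, 0 < r → F r ≤ Real.exp 2 * |b - a| := by
    intro F hF r hr
    exact (hF r hr).trans (mul_le_mul_of_nonneg_right (env_sup r hr) (abs_nonneg _))
  have intOf : ∀ (F : ℝ → ℝ), (∀ r, 0 ≤ F r) → (∀ r : ℝ, 0 < r →
      F r ≤ 2 * r ^ ((1:ℝ)/2) * Real.exp (-(4/3) * r ^ ((3:ℝ)/2)) * |b - a|) →
      (∫ r in Ioi (0:ℝ), (F r)^2) ≤ (Real.exp 2)^2 * |b - a|^2 := by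
    intro F hF0 hF
    have hgint : IntegrableOn (fun r : ℝ => Real.exp 4 * |b - a|^2 * Real.exp (-r)) (Ioi 0) := by
      have h : IntegrableOn (fun x : ℝ => Real.exp (-x)) (Ioi 0) := by
        simpa using exp_neg_integrableOn_Ioi 0 one_pos
      exact h.const_mul _
    have hmono : (∫ r in Ioi (0:ℝ), (F r)^2)
        ≤ ∫ r in Ioi (0:ℝ), Real.exp 4 * |b - a|^2 * Real.exp (-r) := by
      apply integral_mono_of_nonneg
      · exact Eventually.of_forall (fun r => sq_nonneg _)
      · exact hgint
      · rw [EventuallyLE, ae_restrict_iff' measurableSet_Ioi]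
        refine Eventually.of_forall (fun r hr => ?_)
        have h1 : (F r)^2 ≤ (2 * r ^ ((1:ℝ)/2) * Real.exp (-(4/3) * r ^ ((3:ℝ)/2)) * |b - a|)^2 :=
          pow_le_pow_left₀ (hF0 r) (hF r hr) 2
        have h2 : (2 * r ^ ((1:ℝ)/2) * Real.exp (-(4/3) * r ^ ((3:ℝ)/2)) * |b - a|)^2
            = (2 * r ^ ((1:ℝ)/2) * Real.exp (-(4/3) * r ^ ((3:ℝ)/2)))^2 * |b - a|^2 := by ring
        have h3 := env_sq r hr
        calc (F r)^2 ≤ (2 * r ^ ((1:ℝ)/2) * Real.exp (-(4/3) * r ^ ((3:ℝ)/2)))^2 * |b - a|^2 := by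
              rw [← h2]; exact h1
          _ ≤ (Real.exp 4 * Real.exp (-r)) * |b - a|^2 :=
              mul_le_mul_of_nonneg_right h3 (sq_nonneg _)
          _ = Real.exp 4 * |b - a|^2 * Real.exp (-r) := by ring
    have hval : (∫ r in Ioi (0:ℝ), Real.exp 4 * |b - a|^2 * Real.exp (-r))
        = Real.exp 4 * |b - a|^2 := by
      rw [MeasureTheory.integral_const_mul, integral_exp_neg_Ioi_zero, mul_one]
    have he4 : Real.exp 4 = (Real.exp 2)^2 := by
      rw [sq, ← Real.exp_add]; norm_num
    rw [hval, he4] at hmono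
    exact hmono
  exact ⟨supOf _ boundp, supOf _ boundm,
    intOf _ (fun r => norm_nonneg _) boundp,
    intOf _ (fun r => norm_nonneg _) boundm⟩
end
end
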